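/- For the simple random walk with up-probability p started at 0, the duration T^{|k|} (the first hitting time of {+k, -k}) is independent of the event {S hits +k before -k}, for every p ∈ (0,1) and every positive integer k. -/

import Mathlib

open scoped Classical
noncomputable section

def walkPos {n : ℕ} (x : Fin n → Bool) (m : ℕ) : ℤ :=
  ∑ i : Fin n, if (i : ℕ) < m then (if x i then (1 : ℤ) else -1) else 0

def walkWt {n : ℕ} (p : ℝ) (x : Fin n → Bool) : ℝ :=
  ∏ i : Fin n, if x i then p else 1 - p

/-- `P(T^{|k|} = n, S_{T^{|k|}} = e)`: probability that the walk first leaves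
`(-k, k)` at time `n`, landing at `e`. -/
def exitAt (p : ℝ) (k n : ℕ) (e : ℤ) : ℝ :=
  ∑ x : Fin n → Bool,
    if (walkPos x n = e ∧ ∀ m < n, |walkPos x m| < (k : ℤ)) then walkWt p x else 0

lemma walkPos_zero {n : ℕ} (x : Fin n → Bool) : walkPos x 0 = 0 := by
  simp [walkPos]

lemma walkPos_succ {n : ℕ} (x : Fin n → Bool) {m : ℕ} (hm : m < n) :
    walkPos x (m + 1) = walkPos x m + (if x ⟨m, hm⟩ then 1 else -1) := by
  classical
  unfold walkPos
  have key : ∀ i : Fin n,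
      (if (i : ℕ) < m + 1 then (if x i then (1:ℤ) else -1) else 0)
        = (if (i : ℕ) < m then (if x i then (1:ℤ) else -1) else 0)
          + (if i = ⟨m, hm⟩ then (if x i then (1:ℤ) else -1) else 0) := by
    intro i
    rcases lt_trichotomy (i : ℕ) m with h | h | h
    · have : (i : ℕ) < m + 1 := by omega
      have hne : i ≠ ⟨m, hm⟩ := by
        intro he; rw [he] at h; simp at h
      simp [h, this, hne]
    · have he : i = ⟨m, hm⟩ := by
        apply Fin.ext; exact h
      simp [he, Nat.lt_irrefl]
    · have h1 : ¬ ((i : ℕ) < m + 1) := by omega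
      have h2 : ¬ ((i : ℕ) < m) := by omega
      have hne : i ≠ ⟨m, hm⟩ := by
        intro he; rw [he] at h; simp at h
      simp [h1, h2, hne]
  rw [Finset.sum_congr rfl fun i _ => key i, Finset.sum_add_distrib,
    Finset.sum_ite_eq' Finset.univ (⟨m, hm⟩ : Fin n)]
  simp

lemma walkPos_snoc {N : ℕ} (y : Fin N → Bool) (b : Bool) {m : ℕ} (hm : m ≤ N) :
    walkPos (Fin.snoc y b) m = walkPos y m := by
  unfold walkPos
  rw [Fin.sum_univ_castSucc]
  have h1 : ¬ ((Fin.last N : ℕ) < m) := by simp [Fin.last]; omega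
  simp only [h1, if_false, add_zero]
  refine Finset.sum_congr rfl fun i _ => ?_
  simp [Fin.snoc_castSucc]

lemma walkWt_snoc {N : ℕ} (p : ℝ) (y : Fin N → Bool) (b : Bool) :
    walkWt p (Fin.snoc y b) = walkWt p y * (if b then p else 1 - p) := by
  unfold walkWt
  rw [Fin.prod_univ_castSucc]
  simp [Fin.snoc_castSucc, Fin.snoc_last]

lemma walkWt_nonneg {n : ℕ} {p : ℝ} (hp : 0 ≤ p) (hp1 : p ≤ 1) (x : Fin n → Bool) :
    0 ≤ walkWt p x := by
  refine Finset.prod_nonneg fun i _ => ?_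
  cases x i <;> simp <;> linarith

def wSum {N : ℕ} (p : ℝ) (C : (Fin N → Bool) → Prop) : ℝ :=
  ∑ x : Fin N → Bool, if C x then walkWt p x else 0

lemma wSum_snoc {N : ℕ} (p : ℝ) (C : (Fin (N + 1) → Bool) → Prop) :
    wSum p C = wSum p (fun y => C (Fin.snoc y false)) * (1 - p)
      + wSum p (fun y => C (Fin.snoc y true)) * p := by
  classical
  unfold wSum
  rw [← Fintype.sum_equiv (Fin.snocEquiv (fun _ => Bool))
    (fun z => if C (Fin.snoc z.2 z.1) then walkWt p (Fin.snoc z.2 z.1) else 0)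
    (fun x => if C x then walkWt p x else 0) (fun z => by simp [Fin.snocEquiv]; rfl)]
  rw [Fintype.sum_prod_type]
  simp only [Fintype.sum_bool]
  rw [add_comm, Finset.sum_mul, Finset.sum_mul]
  congr 1
  · refine Finset.sum_congr rfl fun y _ => ?_
    rw [walkWt_snoc]
    by_cases h : C (Fin.snoc y false) <;> simp [h]
  · refine Finset.sum_congr rfl fun y _ => ?_
    rw [walkWt_snoc]
    by_cases h : C (Fin.snoc y true) <;> simp [h]

lemma wSum_congr {N : ℕ} (p : ℝ) {C D : (Fin N → Bool) → Prop} (h : ∀ x, C x ↔ D x) :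
    wSum p C = wSum p D := by
  unfold wSum
  exact Finset.sum_congr rfl fun x _ => if_congr (h x) rfl rfl

lemma wSum_nonneg {N : ℕ} {p : ℝ} (hp : 0 ≤ p) (hp1 : p ≤ 1) (C : (Fin N → Bool) → Prop) :
    0 ≤ wSum p C := by
  refine Finset.sum_nonneg fun x _ => ?_
  split
  · exact walkWt_nonneg hp hp1 x
  · exact le_refl 0

lemma wSum_mono {N : ℕ} {p : ℝ} (hp : 0 ≤ p) (hp1 : p ≤ 1) {C D : (Fin N → Bool) → Prop}
    (h : ∀ x, C x → D x) : wSum p C ≤ wSum p D := by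
  refine Finset.sum_le_sum fun x _ => ?_
  by_cases hc : C x
  · simp [hc, h x hc]
  · simp only [hc, if_false]
    split
    · exact walkWt_nonneg hp hp1 x
    · exact le_refl 0

def surv (p : ℝ) (k N : ℕ) : ℝ :=
  wSum p (fun x : Fin N → Bool => ∀ m < N, |walkPos x m| < (k : ℤ))

def survLe (p : ℝ) (k N : ℕ) : ℝ :=
  wSum p (fun x : Fin N → Bool => ∀ m ≤ N, |walkPos x m| < (k : ℤ))

lemma surv_zero (p : ℝ) (k : ℕ) : surv p k 0 = 1 := by
  simp [surv, wSum, walkWt]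

lemma surv_succ (p : ℝ) (k N : ℕ) : surv p k (N + 1) = survLe p k N := by
  unfold surv
  rw [wSum_snoc]
  have h : ∀ (b : Bool) (y : Fin N → Bool),
      (∀ m < N + 1, |walkPos (Fin.snoc y b) m| < (k : ℤ)) ↔
        (∀ m ≤ N, |walkPos y m| < (k : ℤ)) := by
    intro b y
    constructor
    · intro hh m hm
      have := hh m (by omega)
      rwa [walkPos_snoc y b hm] at this
    · intro hh m hm
      have hm' : m ≤ N := by omega
      rw [walkPos_snoc y b hm']
      exact hh m hm'
  rw [wSum_congr p (h false), wSum_congr p (h true)]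
  show survLe p k N * (1 - p) + survLe p k N * p = survLe p k N
  ring

lemma abs_walkPos_le {N k : ℕ} (hk : 0 < k) (x : Fin N → Bool)
    (h : ∀ m < N, |walkPos x m| < (k : ℤ)) : |walkPos x N| ≤ (k : ℤ) := by
  cases N with
  | zero => simp [walkPos_zero]
  | succ M =>
    have hM := h M (by omega)
    rw [walkPos_succ x (by omega : M < M + 1)]
    have habs : |(if x ⟨M, by omega⟩ then (1:ℤ) else -1)| = 1 := by
      split <;> simp
    calc |walkPos x M + _| ≤ |walkPos x M| + |(if x ⟨M, by omega⟩ then (1:ℤ) else -1)| :=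
          abs_add_le _ _
      _ ≤ (k : ℤ) := by rw [habs]; omega

lemma exit_split (p : ℝ) {k : ℕ} (hk : 0 < k) (N : ℕ) :
    surv p k N = exitAt p k N (k : ℤ) + exitAt p k N (-(k : ℤ)) + survLe p k N := by
  classical
  unfold surv survLe exitAt wSum
  rw [← Finset.sum_add_distrib, ← Finset.sum_add_distrib]
  refine Finset.sum_congr rfl fun x _ => ?_
  by_cases hA : ∀ m < N, |walkPos x m| < (k : ℤ)
  · have hb := abs_walkPos_le hk x hA
    have hk0 : (0 : ℤ) < k := by exact_mod_cast hk
    have hka : |(k : ℤ)| = k := abs_of_pos hk0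
    have hbb := abs_le.mp hb
    by_cases h1 : walkPos x N = (k : ℤ)
    · have h3 : ¬ (∀ m ≤ N, |walkPos x m| < (k : ℤ)) := by
        intro hc
        have := hc N le_rfl
        rw [h1, hka] at this
        omega
      rw [if_pos hA, if_pos ⟨h1, hA⟩, if_neg (fun hc => by rw [h1] at hc; omega),
        if_neg h3]
      ring
    · by_cases h2 : walkPos x N = -(k : ℤ)
      · have h3 : ¬ (∀ m ≤ N, |walkPos x m| < (k : ℤ)) := by
          intro hc
          have := hc N le_rfl
          rw [h2, abs_neg, hka] at this
          omega
        rw [if_pos hA, if_neg (fun hc => h1 hc.1), if_pos ⟨h2, hA⟩, if_neg h3]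
        ring
      · have h3 : ∀ m ≤ N, |walkPos x m| < (k : ℤ) := by
          intro m hm
          rcases Nat.lt_or_ge m N with hmN | hmN
          · exact hA m hmN
          · have hmm : m = N := by omega
            subst hmm
            rw [abs_lt]
            omega
        rw [if_pos hA, if_neg (fun hc => h1 hc.1), if_neg (fun hc => h2 hc.1),
          if_pos h3]
        ring
  · have h3 : ¬ (∀ m ≤ N, |walkPos x m| < (k : ℤ)) := by
      intro hc
      exact hA fun m hm => hc m (by omega)
    rw [if_neg hA, if_neg (fun hc => hA hc.2), if_neg (fun hc => hA hc.2), if_neg h3]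
    ring

lemma sum_range_exit (p : ℝ) {k : ℕ} (hk : 0 < k) (N : ℕ) :
    ∑ n ∈ Finset.range N, (exitAt p k n (k : ℤ) + exitAt p k n (-(k : ℤ)))
      = 1 - surv p k N := by
  induction N with
  | zero => simp [surv_zero]
  | succ M ih =>
    rw [Finset.sum_range_succ, ih, surv_succ]
    have := exit_split p hk M
    linarith

def blockUp (p : ℝ) (k N L : ℕ) : ℝ :=
  wSum p (fun x : Fin (N + L) → Bool =>
    (∀ m < N, |walkPos x m| < (k : ℤ)) ∧ ∀ j : Fin (N + L), N ≤ (j : ℕ) → x j = true)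

lemma blockUp_zero (p : ℝ) (k N : ℕ) : blockUp p k N 0 = surv p k N := by
  unfold blockUp surv
  refine wSum_congr p fun x => ?_
  constructor
  · exact fun h => h.1
  · intro h
    refine ⟨h, fun j hj => absurd j.isLt (by omega)⟩

lemma wSum_false {N : ℕ} (p : ℝ) : wSum p (fun _ : Fin N → Bool => False) = 0 := by
  simp [wSum]

lemma blockUp_succ (p : ℝ) (k N L : ℕ) : blockUp p k N (L + 1) = blockUp p k N L * p := by
  set C : (Fin (N + L + 1) → Bool) → Prop := fun x =>
    (∀ m < N, |walkPos x m| < (k : ℤ)) ∧ ∀ j : Fin (N + L + 1), N ≤ (j : ℕ) → x j = true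
    with hC
  have e := wSum_snoc p (N := N + L) (C := C)
  have h1 : (fun y : Fin (N + L) → Bool => C (Fin.snoc y false)) =
      fun _ => False := by
    funext y
    simp only [hC]
    refine propext (iff_false_intro ?_)
    rintro ⟨-, h2⟩
    have := h2 (Fin.last (N + L)) (by simp [Fin.last])
    simp at this
  have h2 : (fun y : Fin (N + L) → Bool => C (Fin.snoc y true)) =
      fun y => (∀ m < N, |walkPos y m| < (k : ℤ)) ∧
        ∀ j : Fin (N + L), N ≤ (j : ℕ) → y j = true := by
    funext y
    simp only [hC]
    refine propext ?_
    constructor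
    · rintro ⟨ha, hb⟩
      refine ⟨fun m hm => ?_, fun j hj => ?_⟩
      · have := ha m hm
        rwa [walkPos_snoc y true (by omega)] at this
      · have := hb (Fin.castSucc j) (by simpa using hj)
        rwa [Fin.snoc_castSucc] at this
    · rintro ⟨ha, hb⟩
      refine ⟨fun m hm => ?_, fun j hj => ?_⟩
      · rw [walkPos_snoc y true (by omega)]
        exact ha m hm
      · rcases Fin.eq_castSucc_or_eq_last j with ⟨i, rfl⟩ | rfl
        · rw [Fin.snoc_castSucc]
          exact hb i (by simpa using hj)
        · exact Fin.snoc_last _ _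
  rw [h1, h2, wSum_false] at e
  calc blockUp p k N (L + 1) = wSum p C := rfl
    _ = 0 * (1 - p) + blockUp p k N L * p := e
    _ = blockUp p k N L * p := by ring

lemma blockUp_eq (p : ℝ) (k N L : ℕ) : blockUp p k N L = surv p k N * p ^ L := by
  induction L with
  | zero => simp [blockUp_zero]
  | succ M ih => rw [blockUp_succ, ih, pow_succ, mul_assoc]

lemma allUp_exits {k N : ℕ} (hk : 0 < k) (x : Fin (N + 2 * k) → Bool)
    (h1 : ∀ m < N + 2 * k, |walkPos x m| < (k : ℤ))
    (h2 : ∀ j : Fin (N + 2 * k), N ≤ (j : ℕ) → x j = true) : False := by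
  have hsN : |walkPos x N| < (k : ℤ) := h1 N (by omega)
  have step : ∀ j : ℕ, j ≤ 2 * k → walkPos x (N + j) = walkPos x N + j := by
    intro j hj
    induction j with
    | zero => simp
    | succ i ih =>
      have hlt : N + i < N + 2 * k := by omega
      rw [Nat.add_succ, walkPos_succ x hlt]
      have hx : x ⟨N + i, hlt⟩ = true := h2 ⟨N + i, hlt⟩ (by simp)
      rw [ih (by omega), hx]
      norm_num
      push_cast
      ring
  have hsk := abs_lt.mp hsN
  have hnn : (0 : ℤ) ≤ (k : ℤ) - walkPos x N := by omega
  set j := ((k : ℤ) - walkPos x N).toNat with hjdef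
  have hjz : (j : ℤ) = (k : ℤ) - walkPos x N := Int.toNat_of_nonneg hnn
  have hj2 : j < 2 * k := by omega
  have hval : walkPos x (N + j) = (k : ℤ) := by
    rw [step j (by omega), hjz]
    ring
  have := h1 (N + j) (by omega)
  rw [hval] at this
  have hk0 : (0 : ℤ) < k := by exact_mod_cast hk
  rw [abs_of_pos hk0] at this
  omega

lemma wSum_prefix (p : ℝ) (k N L : ℕ) :
    wSum p (fun x : Fin (N + L) → Bool => ∀ m < N, |walkPos x m| < (k : ℤ))
      = surv p k N := by
  induction L with
  | zero => rfl
  | succ M ih =>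
    set C : (Fin (N + M + 1) → Bool) → Prop := fun x =>
      ∀ m < N, |walkPos x m| < (k : ℤ) with hC
    have e := wSum_snoc p (N := N + M) (C := C)
    have h : ∀ b : Bool, (fun y : Fin (N + M) → Bool => C (Fin.snoc y b)) =
        fun y => ∀ m < N, |walkPos y m| < (k : ℤ) := by
      intro b
      funext y
      simp only [hC]
      refine propext ⟨fun hh m hm => ?_, fun hh m hm => ?_⟩
      · have := hh m hm
        rwa [walkPos_snoc y b (by omega)] at this
      · rw [walkPos_snoc y b (by omega)]
        exact hh m hm
    rw [h false, h true] at e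
    calc wSum p (fun x : Fin (N + (M + 1)) → Bool => ∀ m < N, |walkPos x m| < (k : ℤ))
        = wSum p C := rfl
      _ = _ := e
      _ = surv p k N := by rw [ih]; ring

lemma surv_decay {p : ℝ} (hp0 : 0 ≤ p) (hp1 : p ≤ 1) {k : ℕ} (hk : 0 < k) (N : ℕ) :
    surv p k (N + 2 * k) ≤ surv p k N * (1 - p ^ (2 * k)) := by
  have key : surv p k (N + 2 * k) ≤
      wSum p (fun x : Fin (N + 2 * k) → Bool => ∀ m < N, |walkPos x m| < (k : ℤ))
        - blockUp p k N (2 * k) := by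
    unfold surv blockUp wSum
    rw [← Finset.sum_sub_distrib]
    refine Finset.sum_le_sum fun x _ => ?_
    by_cases hc1 : ∀ m < N + 2 * k, |walkPos x m| < (k : ℤ)
    · have hc2 : ∀ m < N, |walkPos x m| < (k : ℤ) := fun m hm => hc1 m (by omega)
      have hc3 : ¬ ((∀ m < N, |walkPos x m| < (k : ℤ)) ∧
          ∀ j : Fin (N + 2 * k), N ≤ (j : ℕ) → x j = true) := by
        rintro ⟨-, hup⟩
        exact allUp_exits hk x hc1 hup
      rw [if_pos hc1, if_pos hc2, if_neg hc3]
      simp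
    · rw [if_neg hc1]
      by_cases hc3 : (∀ m < N, |walkPos x m| < (k : ℤ)) ∧
          ∀ j : Fin (N + 2 * k), N ≤ (j : ℕ) → x j = true
      · rw [if_pos hc3, if_pos hc3.1]
        simp
      · rw [if_neg hc3]
        simp only [sub_zero]
        split
        · exact walkWt_nonneg hp0 hp1 x
        · exact le_refl 0
  rw [wSum_prefix, blockUp_eq] at key
  linarith

lemma surv_antitone {p : ℝ} (hp0 : 0 ≤ p) (hp1 : p ≤ 1) (k : ℕ) :
    Antitone (surv p k) := by
  refine antitone_nat_of_succ_le fun N => ?_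
  rw [surv_succ]
  exact wSum_mono hp0 hp1 fun x h m hm => h m (by omega)

lemma surv_geom {p : ℝ} (hp0 : 0 < p) (hp1 : p < 1) {k : ℕ} (hk : 0 < k) (j : ℕ) :
    surv p k (j * (2 * k)) ≤ (1 - p ^ (2 * k)) ^ j := by
  induction j with
  | zero => simp [surv_zero]
  | succ i ih =>
    have h1 : (i + 1) * (2 * k) = i * (2 * k) + 2 * k := by ring
    rw [h1]
    calc surv p k (i * (2 * k) + 2 * k)
        ≤ surv p k (i * (2 * k)) * (1 - p ^ (2 * k)) :=
          surv_decay hp0.le hp1.le hk _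
      _ ≤ (1 - p ^ (2 * k)) ^ i * (1 - p ^ (2 * k)) := by
          have hc0 : 0 ≤ 1 - p ^ (2 * k) := by
            have : p ^ (2 * k) ≤ 1 := pow_le_one₀ hp0.le hp1.le
            linarith
          exact mul_le_mul_of_nonneg_right ih hc0
      _ = (1 - p ^ (2 * k)) ^ (i + 1) := by ring

lemma surv_tendsto {p : ℝ} (hp0 : 0 < p) (hp1 : p < 1) {k : ℕ} (hk : 0 < k) :
    Filter.Tendsto (surv p k) Filter.atTop (nhds 0) := by
  rw [Metric.tendsto_atTop]
  intro ε hε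
  have hc1 : 1 - p ^ (2 * k) < 1 := by
    have : 0 < p ^ (2 * k) := pow_pos hp0 _
    linarith
  obtain ⟨j, hj⟩ := exists_pow_lt_of_lt_one hε hc1
  refine ⟨j * (2 * k), fun n hn => ?_⟩
  have h1 : surv p k n ≤ surv p k (j * (2 * k)) := surv_antitone hp0.le hp1.le k hn
  have h2 : 0 ≤ surv p k n := wSum_nonneg hp0.le hp1.le _
  rw [Real.dist_eq, sub_zero, abs_of_nonneg h2]
  calc surv p k n ≤ surv p k (j * (2 * k)) := h1
    _ ≤ (1 - p ^ (2 * k)) ^ j := surv_geom hp0 hp1 hk j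
    _ < ε := hj

lemma exitAt_nonneg {p : ℝ} (hp0 : 0 ≤ p) (hp1 : p ≤ 1) (k n : ℕ) (e : ℤ) :
    0 ≤ exitAt p k n e := by
  unfold exitAt
  refine Finset.sum_nonneg fun x _ => ?_
  split
  · exact walkWt_nonneg hp0 hp1 x
  · exact le_refl 0

lemma exit_hasSum {p : ℝ} (hp0 : 0 < p) (hp1 : p < 1) {k : ℕ} (hk : 0 < k) :
    HasSum (fun n => exitAt p k n (k : ℤ) + exitAt p k n (-(k : ℤ))) 1 := by
  set f := fun n => exitAt p k n (k : ℤ) + exitAt p k n (-(k : ℤ)) with hf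
  have hfnn : ∀ n, 0 ≤ f n := fun n =>
    add_nonneg (exitAt_nonneg hp0.le hp1.le _ _ _) (exitAt_nonneg hp0.le hp1.le _ _ _)
  have hbound : ∀ N, ∑ n ∈ Finset.range N, f n ≤ 1 := by
    intro N
    rw [hf, sum_range_exit p hk N]
    have := wSum_nonneg hp0.le hp1.le
      (fun x : Fin N → Bool => ∀ m < N, |walkPos x m| < (k : ℤ))
    have h2 : 0 ≤ surv p k N := this
    linarith
  have hs : Summable f := summable_of_sum_range_le hfnn hbound
  have ht : Filter.Tendsto (fun N => ∑ n ∈ Finset.range N, f n)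
      Filter.atTop (nhds (∑' n, f n)) := hs.hasSum.tendsto_sum_nat
  have ht2 : Filter.Tendsto (fun N => ∑ n ∈ Finset.range N, f n)
      Filter.atTop (nhds 1) := by
    have heq : (fun N => ∑ n ∈ Finset.range N, f n) = fun N => 1 - surv p k N := by
      funext N
      rw [hf, sum_range_exit p hk N]
    rw [heq]
    have := (surv_tendsto hp0 hp1 hk).const_sub 1
    simpa using this
  have : (∑' n, f n) = 1 := tendsto_nhds_unique ht ht2
  rw [← this]
  exact hs.hasSum

lemma zpow_finset_sum {r : ℝ} (hr : r ≠ 0) {α : Type*} (s : Finset α) (f : α → ℤ) :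
    r ^ (∑ i ∈ s, f i) = ∏ i ∈ s, r ^ f i := by
  classical
  induction s using Finset.cons_induction with
  | empty => simp
  | cons a t ha ih => rw [Finset.sum_cons, Finset.prod_cons, zpow_add₀ hr, ih]

lemma walkPos_neg {n : ℕ} (x : Fin n → Bool) (m : ℕ) :
    walkPos (fun i => !(x i)) m = - walkPos x m := by
  unfold walkPos
  rw [← Finset.sum_neg_distrib]
  refine Finset.sum_congr rfl fun i _ => ?_
  by_cases h : (i : ℕ) < m <;> cases hxi : x i <;> simp [h, hxi]

lemma walkPos_top {n : ℕ} (x : Fin n → Bool) :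
    walkPos x n = ∑ i : Fin n, (if x i then (1 : ℤ) else -1) := by
  unfold walkPos
  refine Finset.sum_congr rfl fun i _ => ?_
  simp [i.isLt]

lemma walkWt_neg {n : ℕ} {p : ℝ} (hp0 : p ≠ 0) (hp1 : (1 : ℝ) - p ≠ 0) (x : Fin n → Bool) :
    walkWt p (fun i => !(x i)) = walkWt p x * ((1 - p) / p) ^ (walkPos x n) := by
  unfold walkWt
  rw [walkPos_top, zpow_finset_sum (div_ne_zero hp1 hp0), ← Finset.prod_mul_distrib]
  refine Finset.prod_congr rfl fun i _ => ?_
  cases hxi : x i <;> simp [hxi] <;> field_simp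

lemma exitAt_reflect {p : ℝ} (hp0 : p ≠ 0) (hp1 : (1 : ℝ) - p ≠ 0) (k n : ℕ) :
    exitAt p k n (-(k : ℤ)) = ((1 - p) / p) ^ k * exitAt p k n (k : ℤ) := by
  unfold exitAt
  rw [Finset.mul_sum]
  have hinv : Function.Involutive (fun x : Fin n → Bool => fun i => !(x i)) := by
    intro x
    funext i
    simp
  refine (Fintype.sum_bijective _ hinv.bijective
    (fun x => ((1 - p) / p) ^ k *
      (if (walkPos x n = (k : ℤ) ∧ ∀ m < n, |walkPos x m| < (k : ℤ)) then walkWt p x else 0))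
    (fun x => if (walkPos x n = -(k : ℤ) ∧ ∀ m < n, |walkPos x m| < (k : ℤ))
      then walkWt p x else 0)
    (fun x => ?_)).symm
  by_cases hc : walkPos x n = (k : ℤ) ∧ ∀ m < n, |walkPos x m| < (k : ℤ)
  · have hc' : walkPos (fun i => !(x i)) n = -(k : ℤ) ∧
        ∀ m < n, |walkPos (fun i => !(x i)) m| < (k : ℤ) := by
      constructor
      · rw [walkPos_neg, hc.1]
      · intro m hm
        rw [walkPos_neg, abs_neg]
        exact hc.2 m hm
    rw [if_pos hc, if_pos hc', walkWt_neg hp0 hp1, hc.1, zpow_natCast]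
    ring
  · have hc' : ¬ (walkPos (fun i => !(x i)) n = -(k : ℤ) ∧
        ∀ m < n, |walkPos (fun i => !(x i)) m| < (k : ℤ)) := by
      rintro ⟨h1, h2⟩
      refine hc ⟨?_, fun m hm => ?_⟩
      · rw [walkPos_neg] at h1
        omega
      · have := h2 m hm
        rwa [walkPos_neg, abs_neg] at this
    rw [if_neg hc, if_neg hc']
    simp
/-- The duration `T^{|k|}` is independent of whether the walk first hits `+k` or
`-k`:  `P(T^{|k|} = n, S_{T^{|k|}} = k) = P(T^{|k|} = n) · P(S_{T^{|k|}} = k)`. -/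
theorem duration_indep_winner (p : ℝ) (hp : 0 < p) (hp1 : p < 1) (k : ℕ) (hk : 0 < k) :
    ∀ n : ℕ,
      exitAt p k n (k : ℤ) =
        (exitAt p k n (k : ℤ) + exitAt p k n (-(k : ℤ))) * ∑' m : ℕ, exitAt p k m (k : ℤ) := by
  intro n
  have hp0 : p ≠ 0 := ne_of_gt hp
  have h1p : (1 : ℝ) - p ≠ 0 := by linarith
  set ρ : ℝ := ((1 - p) / p) ^ k with hρ
  have hρ0 : 0 ≤ ρ := pow_nonneg (div_nonneg (by linarith) hp.le) k
  have hρ1 : (0 : ℝ) < 1 + ρ := by linarith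
  have hrefl : ∀ m : ℕ, exitAt p k m (-(k : ℤ)) = ρ * exitAt p k m (k : ℤ) :=
    fun m => exitAt_reflect hp0 h1p k m
  have hsum := exit_hasSum hp hp1 hk
  have hfun : (fun m => exitAt p k m (k : ℤ) + exitAt p k m (-(k : ℤ)))
      = fun m => (1 + ρ) * exitAt p k m (k : ℤ) := by
    funext m
    rw [hrefl m]
    ring
  rw [hfun] at hsum
  have h2 : HasSum (fun m => exitAt p k m (k : ℤ)) ((1 + ρ)⁻¹) := by
    have := (hasSum_mul_left_iff (ne_of_gt hρ1)
      (f := fun m => exitAt p k m (k : ℤ)) (a₁ := (1 + ρ)⁻¹) (L := SummationFilter.unconditional ℕ)).mp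
    apply this
    rw [mul_inv_cancel₀ (ne_of_gt hρ1)]
    exact hsum
  rw [h2.tsum_eq, hrefl n]
  field_simp
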